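/- arXiv:1904.07957 — 6 statements merged into one kernel-verified Lean document; each statement's English description precedes it below -/
import Mathlib

section
/- The maximum-matching size function is 2-almost-smooth: for any ε ∈ (0,1) and pairwise disjoint edge sets A, B, C on a common vertex set, if ε·m(A ∪ B) ≤ m(B), then ε·m(A ∪ B ∪ C) ≤ 2·m(B ∪ C), where m(F) is the maximum matching size within edge set F. -/
/-- A set of edges is a matching if its edges are pairwise vertex-disjoint. -/
def IsMatching {V : Type*} (M : Finset (Sym2 V)) : Prop :=
  ∀ e ∈ M, ∀ f ∈ M, e ≠ f → ∀ v ∈ e, v ∉ f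

open Classical in
/-- `matchNum F` is the maximum size of a matching using only edges from `F`. -/
noncomputable def matchNum {V : Type*} (F : Finset (Sym2 V)) : ℕ :=
  (F.powerset.filter fun M => IsMatching M).sup Finset.card

open Classical in
lemma matchNum_mono {V : Type*} {F G : Finset (Sym2 V)} (h : F ⊆ G) :
    matchNum F ≤ matchNum G := by
  apply Finset.sup_le
  intro M hM
  simp only [Finset.mem_filter, Finset.mem_powerset] at hM
  exact Finset.le_sup (f := Finset.card)
    (by simp only [Finset.mem_filter, Finset.mem_powerset]; exact ⟨hM.1.trans h, hM.2⟩)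

open Classical in
lemma matchNum_union_le {V : Type*} [DecidableEq V] (F G : Finset (Sym2 V)) :
    matchNum (F ∪ G) ≤ matchNum F + matchNum G := by
  apply Finset.sup_le
  intro M hM
  simp only [Finset.mem_filter, Finset.mem_powerset] at hM
  obtain ⟨hsub, hmatch⟩ := hM
  have h1 : (M ∩ F).card ≤ matchNum F := by
    apply Finset.le_sup (f := Finset.card)
    simp only [Finset.mem_filter, Finset.mem_powerset]
    exact ⟨Finset.inter_subset_right, fun e he f hf =>
      hmatch e (Finset.mem_of_mem_inter_left he) f (Finset.mem_of_mem_inter_left hf)⟩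
  have h2 : (M \ F).card ≤ matchNum G := by
    apply Finset.le_sup (f := Finset.card)
    simp only [Finset.mem_filter, Finset.mem_powerset]
    refine ⟨fun e he => ?_, fun e he f hf => hmatch e (Finset.sdiff_subset he) f (Finset.sdiff_subset hf)⟩
    have := Finset.mem_sdiff.mp he
    rcases Finset.mem_union.mp (hsub this.1) with h' | h'
    · exact absurd h' this.2
    · exact h'
  calc M.card = (M ∩ F).card + (M \ F).card := (Finset.card_inter_add_card_sdiff M F).symm
    _ ≤ matchNum F + matchNum G := Nat.add_le_add h1 h2

theorem matchNum_almost_smooth {V : Type*} [DecidableEq V]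
    (ε : ℝ) (hε : 0 < ε) (hε1 : ε < 1)
    (A B C : Finset (Sym2 V))
    (hAB : Disjoint A B) (hBC : Disjoint B C) (hAC : Disjoint A C)
    (h : ε * (matchNum (A ∪ B) : ℝ) ≤ (matchNum B : ℝ)) :
    ε * (matchNum (A ∪ B ∪ C) : ℝ) ≤ 2 * (matchNum (B ∪ C) : ℝ) := by
  have h1 : (matchNum (A ∪ B ∪ C) : ℝ) ≤ (matchNum (A ∪ B) : ℝ) + (matchNum C : ℝ) := by
    exact_mod_cast matchNum_union_le (A ∪ B) C
  have h2 : (matchNum B : ℝ) ≤ (matchNum (B ∪ C) : ℝ) := by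
    exact_mod_cast matchNum_mono (Finset.subset_union_left (s₂ := C))
  have h3 : (matchNum C : ℝ) ≤ (matchNum (B ∪ C) : ℝ) := by
    exact_mod_cast matchNum_mono (Finset.subset_union_right (s₁ := B))
  have hC : (0:ℝ) ≤ (matchNum C : ℝ) := Nat.cast_nonneg _
  nlinarith [mul_le_mul_of_nonneg_left h1 hε.le]
end

section
/- The minimum vertex-cover size function is 2-almost-smooth: for any ε ∈ (0,1) and pairwise disjoint edge sets A, B, C on a common vertex set, if ε·VC(A ∪ B) ≤ VC(B), then ε·VC(A ∪ B ∪ C) ≤ 2·VC(B ∪ C). -/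
/-- `C` is a vertex cover of the edge set `F` if every edge of `F` has an
endpoint in `C`. -/
def IsCover {V : Type*} (C : Finset V) (F : Finset (Sym2 V)) : Prop :=
  ∀ e ∈ F, ∃ v ∈ C, v ∈ e

/-- `vcNum F` is the minimum size of a vertex cover of the edge set `F`. -/
noncomputable def vcNum {V : Type*} (F : Finset (Sym2 V)) : ℕ :=
  sInf {n | ∃ C : Finset V, IsCover C F ∧ C.card = n}

lemma vcNum_exists_cover {V : Type*} [DecidableEq V] (F : Finset (Sym2 V)) :
    ∃ Cv : Finset V, IsCover Cv F ∧ Cv.card = vcNum F := by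
  have hne : {n | ∃ C : Finset V, IsCover C F ∧ C.card = n}.Nonempty := by
    refine ⟨(F.image (fun e => e.out.1)).card, F.image (fun e => e.out.1), ?_, rfl⟩
    intro e he
    exact ⟨e.out.1, Finset.mem_image_of_mem _ he, Sym2.out_fst_mem e⟩
  exact (Nat.sInf_mem hne).elim fun Cv h => ⟨Cv, h.1, h.2⟩

lemma vcNum_le_card {V : Type*} {F : Finset (Sym2 V)} {Cv : Finset V}
    (h : IsCover Cv F) : vcNum F ≤ Cv.card :=
  Nat.sInf_le ⟨Cv, h, rfl⟩

lemma vcNum_mono {V : Type*} [DecidableEq V] {F G : Finset (Sym2 V)} (h : F ⊆ G) :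
    vcNum F ≤ vcNum G := by
  obtain ⟨Cv, hc, hcard⟩ := vcNum_exists_cover G
  exact hcard ▸ vcNum_le_card (fun e he => hc e (h he))

lemma vcNum_union_le {V : Type*} [DecidableEq V] (F G : Finset (Sym2 V)) :
    vcNum (F ∪ G) ≤ vcNum F + vcNum G := by
  obtain ⟨C1, hc1, h1⟩ := vcNum_exists_cover F
  obtain ⟨C2, hc2, h2⟩ := vcNum_exists_cover G
  calc vcNum (F ∪ G) ≤ (C1 ∪ C2).card := by
        refine vcNum_le_card fun e he => ?_
        rcases Finset.mem_union.1 he with he | he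
        · obtain ⟨v, hv, hve⟩ := hc1 e he
          exact ⟨v, Finset.mem_union_left _ hv, hve⟩
        · obtain ⟨v, hv, hve⟩ := hc2 e he
          exact ⟨v, Finset.mem_union_right _ hv, hve⟩
    _ ≤ C1.card + C2.card := Finset.card_union_le _ _
    _ = vcNum F + vcNum G := by rw [h1, h2]

theorem vcNum_almost_smooth {V : Type*} [DecidableEq V]
    (ε : ℝ) (hε : 0 < ε) (hε1 : ε < 1)
    (A B C : Finset (Sym2 V))
    (hAB : Disjoint A B) (hBC : Disjoint B C) (hAC : Disjoint A C)
    (h : ε * (vcNum (A ∪ B) : ℝ) ≤ (vcNum B : ℝ)) :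
    ε * (vcNum (A ∪ B ∪ C) : ℝ) ≤ 2 * (vcNum (B ∪ C) : ℝ) := by
  have h1 : vcNum (A ∪ B ∪ C) ≤ vcNum (A ∪ B) + vcNum C := vcNum_union_le _ _
  have h2 : vcNum C ≤ vcNum (B ∪ C) := vcNum_mono Finset.subset_union_right
  have h3 : vcNum B ≤ vcNum (B ∪ C) := vcNum_mono Finset.subset_union_left
  have h1' : (vcNum (A ∪ B ∪ C) : ℝ) ≤ (vcNum (A ∪ B) : ℝ) + (vcNum C : ℝ) := by
    exact_mod_cast h1
  have h2' : (vcNum C : ℝ) ≤ (vcNum (B ∪ C) : ℝ) := by exact_mod_cast h2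
  have h3' : (vcNum B : ℝ) ≤ (vcNum (B ∪ C) : ℝ) := by exact_mod_cast h3
  have hεC : ε * (vcNum C : ℝ) ≤ (vcNum C : ℝ) := by
    nlinarith [(Nat.cast_nonneg (vcNum C) : (0:ℝ) ≤ _)]
  nlinarith
end

section
/- The factor 2 in the almost-smoothness of maximum-matching size is tight: there exist pairwise disjoint edge sets A, B, C (on a graph consisting of n vertex-disjoint paths of length 3, where A contains the first edge of each path, B the middle edge, and C the last edge) such that m(A ∪ B) = m(B) = m(B ∪ C) = n while m(A ∪ B ∪ C) = 2n. -/
/-- The first edges `{x_i, y_i}` of `n` disjoint paths `x_i - y_i - z_i - w_i`,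
where vertex `(i, j)` is the `j`-th vertex of the `i`-th path. -/
def pathEdgesA (n : ℕ) : Finset (Sym2 (Fin n × Fin 4)) :=
  Finset.univ.image fun i : Fin n => s((i, (0 : Fin 4)), (i, (1 : Fin 4)))

/-- The middle edges `{y_i, z_i}` of the `n` disjoint paths. -/
def pathEdgesB (n : ℕ) : Finset (Sym2 (Fin n × Fin 4)) :=
  Finset.univ.image fun i : Fin n => s((i, (1 : Fin 4)), (i, (2 : Fin 4)))

/-- The last edges `{z_i, w_i}` of the `n` disjoint paths. -/
def pathEdgesC (n : ℕ) : Finset (Sym2 (Fin n × Fin 4)) :=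
  Finset.univ.image fun i : Fin n => s((i, (2 : Fin 4)), (i, (3 : Fin 4)))

lemma le_matchNum {V : Type*} (F M : Finset (Sym2 V)) (hs : M ⊆ F) (hm : IsMatching M) :
    M.card ≤ matchNum F := by
  classical
  apply Finset.le_sup (f := Finset.card)
  simp only [Finset.mem_filter, Finset.mem_powerset]
  exact ⟨hs, hm⟩

lemma matchNum_le {V : Type*} (F : Finset (Sym2 V)) (k : ℕ)
    (h : ∀ M ⊆ F, IsMatching M → M.card ≤ k) : matchNum F ≤ k := by
  apply Finset.sup_le
  intro M hM
  classical
  simp only [Finset.mem_filter, Finset.mem_powerset] at hM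
  exact h M hM.1 hM.2

def fpath (n : ℕ) : Sym2 (Fin n × Fin 4) → Fin n :=
  Sym2.lift ⟨fun a b => a.1 ⊔ b.1, fun _ _ => sup_comm _ _⟩

def maxc (n : ℕ) : Sym2 (Fin n × Fin 4) → Fin 4 :=
  Sym2.lift ⟨fun a b => a.2 ⊔ b.2, fun _ _ => sup_comm _ _⟩

@[simp] lemma maxc_mk (n : ℕ) (i : Fin n) (j k : Fin 4) :
    maxc n s((i, j), (i, k)) = j ⊔ k := rfl

@[simp] lemma fpath_mk (n : ℕ) (i : Fin n) (j k : Fin 4) :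
    fpath n s((i, j), (i, k)) = i := by simp [fpath]

lemma memA {n : ℕ} {e : Sym2 (Fin n × Fin 4)} :
    e ∈ pathEdgesA n ↔ ∃ i, e = s((i, (0:Fin 4)), (i, (1:Fin 4))) := by
  simp [pathEdgesA, eq_comm]

lemma memB {n : ℕ} {e : Sym2 (Fin n × Fin 4)} :
    e ∈ pathEdgesB n ↔ ∃ i, e = s((i, (1:Fin 4)), (i, (2:Fin 4))) := by
  simp [pathEdgesB, eq_comm]

lemma memC {n : ℕ} {e : Sym2 (Fin n × Fin 4)} :
    e ∈ pathEdgesC n ↔ ∃ i, e = s((i, (2:Fin 4)), (i, (3:Fin 4))) := by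
  simp [pathEdgesC, eq_comm]

lemma cardB (n : ℕ) : (pathEdgesB n).card = n := by
  rw [pathEdgesB, Finset.card_image_of_injective _ ?_, Finset.card_univ, Fintype.card_fin]
  intro i j h
  simpa [Sym2.eq_iff, Prod.ext_iff] using h

lemma matchingB (n : ℕ) : IsMatching (pathEdgesB n) := by
  intro e he f hf hef v hv
  obtain ⟨i, rfl⟩ := memB.1 he
  obtain ⟨j, rfl⟩ := memB.1 hf
  have hij : i ≠ j := by rintro rfl; exact hef rfl
  intro hvf
  simp only [Sym2.mem_iff] at hv hvf
  rcases hv with rfl | rfl <;> rcases hvf with h | h <;>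
    exact hij (by simpa [Prod.ext_iff] using h)

lemma matchingAC (n : ℕ) : IsMatching (pathEdgesA n ∪ pathEdgesC n) := by
  intro e he f hf hef v hv hvf
  simp only [Finset.mem_union] at he hf
  rcases he with he | he <;> rcases hf with hf | hf <;>
    [obtain ⟨i, rfl⟩ := memA.1 he; obtain ⟨i, rfl⟩ := memA.1 he;
     obtain ⟨i, rfl⟩ := memC.1 he; obtain ⟨i, rfl⟩ := memC.1 he] <;>
    [obtain ⟨j, rfl⟩ := memA.1 hf; obtain ⟨j, rfl⟩ := memC.1 hf;
     obtain ⟨j, rfl⟩ := memA.1 hf; obtain ⟨j, rfl⟩ := memC.1 hf] <;>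
  · simp only [Sym2.mem_iff] at hv hvf
    rcases hv with rfl | rfl <;> rcases hvf with h | h <;>
      simp_all [Prod.ext_iff] <;> exact hef (by simp [h])

lemma cardAC (n : ℕ) : (pathEdgesA n ∪ pathEdgesC n).card = 2 * n := by
  classical
  have hd : Disjoint (pathEdgesA n) (pathEdgesC n) := by
    rw [Finset.disjoint_left]
    intro e he hc
    obtain ⟨i, rfl⟩ := memA.1 he
    obtain ⟨j, hj⟩ := memC.1 hc
    simp [Sym2.eq_iff, Prod.ext_iff] at hj
  rw [Finset.card_union_of_disjoint hd]
  have hA : (pathEdgesA n).card = n := by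
    rw [pathEdgesA, Finset.card_image_of_injective _ ?_, Finset.card_univ, Fintype.card_fin]
    intro i j h; simpa [Sym2.eq_iff, Prod.ext_iff] using h
  have hC : (pathEdgesC n).card = n := by
    rw [pathEdgesC, Finset.card_image_of_injective _ ?_, Finset.card_univ, Fintype.card_fin]
    intro i j h; simpa [Sym2.eq_iff, Prod.ext_iff] using h
  rw [hA, hC]; ring

-- upper bound for A ∪ B (and B ∪ C by symmetry of argument): every M matching in it has card ≤ n
lemma ub_two (n : ℕ) (F : Finset (Sym2 (Fin n × Fin 4))) (c : Fin 4)
    (hF : ∀ e ∈ F, ∃ i : Fin n, fpath n e = i ∧ (i, c) ∈ e) :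
    ∀ M ⊆ F, IsMatching M → M.card ≤ n := by
  intro M hMF hm
  have := Finset.card_le_card_of_injOn (fpath n) (fun e _ => Finset.mem_univ (fpath n e)) ?_
    (s := M) (t := Finset.univ)
  · simpa using this
  · intro e he a ha hfa
    by_contra hne
    obtain ⟨i, hi, hie⟩ := hF e (hMF he)
    obtain ⟨j, hj, hja⟩ := hF a (hMF ha)
    have : i = j := by rw [← hi, ← hj, hfa]
    subst this
    exact hm e he a ha hne (i, c) hie hja


set_option maxHeartbeats 1000000 in
theorem almost_smoothness_factor_two_tight (n : ℕ) :
    Disjoint (pathEdgesA n) (pathEdgesB n) ∧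
    Disjoint (pathEdgesB n) (pathEdgesC n) ∧
    Disjoint (pathEdgesA n) (pathEdgesC n) ∧
    matchNum (pathEdgesA n ∪ pathEdgesB n) = n ∧
    matchNum (pathEdgesB n) = n ∧
    matchNum (pathEdgesB n ∪ pathEdgesC n) = n ∧
    matchNum (pathEdgesA n ∪ pathEdgesB n ∪ pathEdgesC n) = 2 * n := by
  have hdAB : Disjoint (pathEdgesA n) (pathEdgesB n) := by
    rw [Finset.disjoint_left]
    intro e he hb
    obtain ⟨i, rfl⟩ := memA.1 he
    obtain ⟨j, hj⟩ := memB.1 hb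
    simp [Sym2.eq_iff, Prod.ext_iff] at hj
  have hdBC : Disjoint (pathEdgesB n) (pathEdgesC n) := by
    rw [Finset.disjoint_left]
    intro e he hb
    obtain ⟨i, rfl⟩ := memB.1 he
    obtain ⟨j, hj⟩ := memC.1 hb
    simp [Sym2.eq_iff, Prod.ext_iff] at hj
  have hdAC : Disjoint (pathEdgesA n) (pathEdgesC n) := by
    rw [Finset.disjoint_left]
    intro e he hb
    obtain ⟨i, rfl⟩ := memA.1 he
    obtain ⟨j, hj⟩ := memC.1 hb
    simp [Sym2.eq_iff, Prod.ext_iff] at hj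
  have hBn : matchNum (pathEdgesB n) = n := by
    apply le_antisymm
    · apply matchNum_le
      exact ub_two n _ 1 (by
        intro e he
        obtain ⟨i, rfl⟩ := memB.1 he
        exact ⟨i, by simp, by simp⟩)
    · have := le_matchNum (pathEdgesB n) (pathEdgesB n) le_rfl (matchingB n)
      rwa [cardB] at this
  refine ⟨hdAB, hdBC, hdAC, ?_, hBn, ?_, ?_⟩
  · apply le_antisymm
    · apply matchNum_le
      exact ub_two n _ 1 (by
        intro e he
        rcases Finset.mem_union.1 he with h | h
        · obtain ⟨i, rfl⟩ := memA.1 h; exact ⟨i, by simp, by simp⟩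
        · obtain ⟨i, rfl⟩ := memB.1 h; exact ⟨i, by simp, by simp⟩)
    · have := le_matchNum (pathEdgesA n ∪ pathEdgesB n) (pathEdgesB n)
        Finset.subset_union_right (matchingB n)
      rwa [cardB] at this
  · apply le_antisymm
    · apply matchNum_le
      exact ub_two n _ 2 (by
        intro e he
        rcases Finset.mem_union.1 he with h | h
        · obtain ⟨i, rfl⟩ := memB.1 h; exact ⟨i, by simp, by simp⟩
        · obtain ⟨i, rfl⟩ := memC.1 h; exact ⟨i, by simp, by simp⟩)
    · have := le_matchNum (pathEdgesB n ∪ pathEdgesC n) (pathEdgesB n)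
        Finset.subset_union_left (matchingB n)
      rwa [cardB] at this
  · apply le_antisymm
    · apply matchNum_le
      intro M hMF hm
      set g : Sym2 (Fin n × Fin 4) → Fin n × Fin 2 :=
        fun e => (fpath n e, ![0, 0, 0, 1] (maxc n e)) with hg
      have := Finset.card_le_card_of_injOn g (fun e _ => Finset.mem_univ (g e))
        ?_ (s := M) (t := Finset.univ)
      · simpa [Fintype.card_prod, mul_comm] using this
      · intro e he a ha hfa
        by_contra hne
        have heM : e ∈ M := he
        have haM : a ∈ M := ha
        have heF := hMF heM
        have haF := hMF haM
        simp only [Finset.mem_union] at heF haF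
        rcases heF with (he' | he') | he' <;> rcases haF with (ha' | ha') | ha'
        all_goals {
          first
          | (obtain ⟨i, rfl⟩ := memA.1 he') | (obtain ⟨i, rfl⟩ := memB.1 he')
          | (obtain ⟨i, rfl⟩ := memC.1 he')
          first
          | (obtain ⟨j, rfl⟩ := memA.1 ha') | (obtain ⟨j, rfl⟩ := memB.1 ha')
          | (obtain ⟨j, rfl⟩ := memC.1 ha')
          simp only [hg, Prod.mk.injEq, fpath_mk, maxc_mk] at hfa
          obtain ⟨rfl, hsnd⟩ := hfa
          first
          | exact hne rfl
          | ((refine hm _ heM _ haM hne (i, 1) ?_ ?_ <;> simp) ; done)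
          | ((refine hm _ heM _ haM hne (i, 2) ?_ ?_ <;> simp) ; done)
          | (revert hsnd; decide) }
    · have := le_matchNum (pathEdgesA n ∪ pathEdgesB n ∪ pathEdgesC n)
        (pathEdgesA n ∪ pathEdgesC n) ?_ (matchingAC n)
      · rwa [cardAC] at this
      · intro e he
        rcases Finset.mem_union.1 he with h | h
        · exact Finset.mem_union_left _ (Finset.mem_union_left _ h)
        · exact Finset.mem_union_right _ h
end

section
/- The function E*_α is subadditive over stream concatenation: for disjoint consecutive segments A and B of an edge stream, E*_α(AB) ≤ E*_α(A) + E*_α(B), where E*_α(S) is the maximum over prefixes S_t of S of the number of α-good edges in S_t. -/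
/-- The number of edges strictly after position `i` in the stream `S` that are
incident to the vertex `v`. -/
def laterDeg {V : Type*} [DecidableEq V] (S : List (Sym2 V)) (i : ℕ) (v : V) : ℕ :=
  ((S.drop (i + 1)).filter fun e => v ∈ e).length

open Classical in
/-- The positions of the α-good edges of the stream `S`: edge `e_i` is α-good
if each of its endpoints is incident to at most `α` edges occurring strictly
after position `i`. -/
noncomputable def goodIndices {V : Type*} [DecidableEq V] (α : ℕ) (S : List (Sym2 V)) : Finset ℕ :=
  (Finset.range S.length).filter fun i =>
    ∀ e : Sym2 V, S[i]? = some e → ∀ v ∈ e, laterDeg S i v ≤ α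

/-- `Estar α S` is the maximum, over prefixes `S_t` of `S`, of the number of
α-good edges of `S_t`. -/
noncomputable def Estar {V : Type*} [DecidableEq V] (α : ℕ) (S : List (Sym2 V)) : ℕ :=
  (Finset.range (S.length + 1)).sup fun t => (goodIndices α (S.take t)).card

lemma laterDeg_append_left {V : Type*} [DecidableEq V] (A C : List (Sym2 V)) (i : ℕ) (v : V) :
    laterDeg A i v ≤ laterDeg (A ++ C) i v := by
  unfold laterDeg
  rw [List.drop_append, List.filter_append, List.length_append]
  exact Nat.le_add_right _ _

lemma laterDeg_append_right {V : Type*} [DecidableEq V] (A C : List (Sym2 V)) (j : ℕ) (v : V) :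
    laterDeg (A ++ C) (A.length + j) v = laterDeg C j v := by
  unfold laterDeg
  rw [List.drop_append]
  have h1 : A.drop (A.length + j + 1) = [] := List.drop_eq_nil_of_le (by omega)
  have h2 : A.length + j + 1 - A.length = j + 1 := by omega
  rw [h1, h2, List.nil_append]

lemma goodIndices_append_subset {V : Type*} [DecidableEq V] (α : ℕ) (A C : List (Sym2 V)) :
    goodIndices α (A ++ C) ⊆ goodIndices α A ∪ (goodIndices α C).image (A.length + ·) := by
  intro i hi
  simp only [goodIndices, Finset.mem_filter, Finset.mem_range, List.length_append] at hi
  obtain ⟨hlen, hgood⟩ := hi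
  rcases lt_or_ge i A.length with h | h
  · apply Finset.mem_union_left
    simp only [goodIndices, Finset.mem_filter, Finset.mem_range]
    refine ⟨h, fun e he v hv => ?_⟩
    have : (A ++ C)[i]? = some e := by rw [List.getElem?_append, if_pos h]; exact he
    exact le_trans (laterDeg_append_left A C i v) (hgood e this v hv)
  · apply Finset.mem_union_right
    rw [Finset.mem_image]
    refine ⟨i - A.length, ?_, by omega⟩
    simp only [goodIndices, Finset.mem_filter, Finset.mem_range]
    refine ⟨by omega, fun e he v hv => ?_⟩
    have heq : (A ++ C)[i]? = some e := by
      rw [List.getElem?_append, if_neg (by omega)]; exact he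
    have := hgood e heq v hv
    have hi' : i = A.length + (i - A.length) := by omega
    rwa [hi', laterDeg_append_right] at this

lemma card_goodIndices_le_Estar {V : Type*} [DecidableEq V] (α : ℕ) (S : List (Sym2 V))
    (t : ℕ) (ht : t ≤ S.length) : (goodIndices α (S.take t)).card ≤ Estar α S := by
  apply Finset.le_sup (f := fun t => (goodIndices α (S.take t)).card)
  simp only [Finset.mem_range]; omega

theorem Estar_subadditive {V : Type*} [DecidableEq V] (α : ℕ)
    (A B : List (Sym2 V)) (hdisj : A.Disjoint B) :
    Estar α (A ++ B) ≤ Estar α A + Estar α B := by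
  apply Finset.sup_le
  intro t ht
  simp only [Finset.mem_range, List.length_append] at ht
  rcases le_or_gt t A.length with h | h
  · rw [List.take_append_of_le_length h]
    exact le_trans (card_goodIndices_le_Estar α A t h) (Nat.le_add_right _ _)
  · have htake : (A ++ B).take t = A ++ B.take (t - A.length) := by
      rw [List.take_append, List.take_of_length_le (by omega)]
    rw [htake]
    calc (goodIndices α (A ++ B.take (t - A.length))).card
        ≤ (goodIndices α A ∪ (goodIndices α (B.take (t - A.length))).image (A.length + ·)).card :=
          Finset.card_le_card (goodIndices_append_subset α A _)
      _ ≤ (goodIndices α A).card + ((goodIndices α (B.take (t - A.length))).image (A.length + ·)).card :=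
          Finset.card_union_le _ _
      _ ≤ Estar α A + Estar α B := by
          gcongr
          · have := card_goodIndices_le_Estar α A A.length le_rfl
            rwa [List.take_length] at this
          · exact le_trans (Finset.card_image_le) (card_goodIndices_le_Estar α B _ (by omega))
end

section
/- Approximation-ratio sandwich in the almost-smooth histogram: let f be a non-negative function on streams that is c-left-monotone (f(Y) ≤ c·f(XY) for disjoint segments X,Y) and (c,d)-almost-smooth, and let Λ be a C-approximation of f in the sense f(X) ≤ Λ(X) ≤ (1+ε)C·f(X). Suppose disjoint segments B₁' ⊇ B₂' and suffix D satisfy (1−ε)Λ(B₁') < Λ(B₂'), B₁ = B₁'D, B₂ = B₂'D, and the window W satisfies B₂ ⊆ W ⊆ B₁. Then (1/(cC(1+ε)))·Λ(B₂) ≤ f(W) ≤ cdC·((1+ε)/(1−ε)²)·Λ(B₂). -/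
theorem almost_smooth_histogram_sandwich {E : Type*}
    (f Λ : List E → ℝ) (c d C ε : ℝ)
    (hc : 1 ≤ c) (hd : 1 ≤ d) (hC : 1 ≤ C) (hε : 0 < ε) (hε2 : ε < 1 / 2)
    (hnonneg : ∀ X : List E, 0 ≤ f X)
    -- `f` is c-left-monotone
    (hmono : ∀ X Y : List E, f Y ≤ c * f (X ++ Y))
    -- `f` is (c,d)-almost-smooth
    (hsmooth : ∀ ε' : ℝ, 0 < ε' → ∀ X Y Z : List E,
      ε' * f (X ++ Y) ≤ f Y → ε' * f (X ++ Y ++ Z) ≤ d * f (Y ++ Z))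
    -- `Λ` is a C-approximation of `f`
    (happrox : ∀ X : List E, f X ≤ Λ X ∧ Λ X ≤ (1 + ε) * C * f X)
    -- buckets: B₂' is a suffix of B₁' = P ++ B₂', D is the later part of the
    -- stream, and the window W satisfies B₂ ⊆ W ⊆ B₁ (as suffixes)
    (P B₂' D Q R B₁ B₂ W : List E)
    (hB₁ : B₁ = (P ++ B₂') ++ D) (hB₂ : B₂ = B₂' ++ D)
    (hW : W = Q ++ B₂) (hWB₁ : B₁ = R ++ W)
    (hclose : (1 - ε) * Λ (P ++ B₂') < Λ B₂') :
    (1 / (c * C * (1 + ε))) * Λ B₂ ≤ f W ∧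
    f W ≤ c * d * C * ((1 + ε) / (1 - ε) ^ 2) * Λ B₂ := by
  have hε1 : (0:ℝ) < 1 - ε := by linarith
  have h1ε : (0:ℝ) < 1 + ε := by linarith
  have hCpos : (0:ℝ) < C := by linarith
  have hcpos : (0:ℝ) < c := by linarith
  have hdpos : (0:ℝ) < d := by linarith
  set ε' : ℝ := (1 - ε) / ((1 + ε) * C) with hε'def
  have hε'pos : 0 < ε' := by positivity
  have hprem : ε' * f (P ++ B₂') ≤ f B₂' := by
    have h1 := (happrox (P ++ B₂')).1
    have h2 := (happrox B₂').2
    have key : (1 - ε) * f (P ++ B₂') ≤ (1 + ε) * C * f B₂' := by nlinarith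
    rw [hε'def, div_mul_eq_mul_div, div_le_iff₀ (by positivity)]
    nlinarith
  have hsm := hsmooth ε' hε'pos P B₂' D hprem
  have hfB1 : f B₁ = f (P ++ (B₂' ++ D)) := by rw [hB₁, List.append_assoc]
  constructor
  · have h2 := (happrox B₂).2
    have hm := hmono Q B₂
    rw [hW]
    rw [div_mul_eq_mul_div, div_le_iff₀ (by positivity)]
    have hh := mul_le_mul_of_nonneg_left hm (by positivity : (0:ℝ) ≤ (1 + ε) * C)
    nlinarith [hnonneg (Q ++ B₂)]
  · have hm := hmono R W
    rw [← hWB₁, hfB1] at hm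
    have h1 := (happrox B₂).1
    rw [hB₂]
    have hsm' : (1 - ε) * f (P ++ (B₂' ++ D)) ≤ (1 + ε) * C * (d * f (B₂' ++ D)) := by
      rw [hε'def, div_mul_eq_mul_div, div_le_iff₀ (by positivity)] at hsm
      have heq : f (P ++ B₂' ++ D) = f (P ++ (B₂' ++ D)) := by
        rw [List.append_assoc]
      rw [heq] at hsm
      linear_combination hsm
    rw [hB₂] at h1
    have hfpos := hnonneg (B₂' ++ D)
    have hfpos2 := hnonneg (P ++ (B₂' ++ D))
    have hΛpos : 0 ≤ Λ (B₂' ++ D) := le_trans hfpos h1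
    have hfin : f W * (1 - ε) ≤ c * d * C * (1 + ε) * Λ (B₂' ++ D) := by
      have t1 := mul_le_mul_of_nonneg_right hm hε1.le
      have t2 := mul_le_mul_of_nonneg_left hsm' hcpos.le
      have t3 := mul_le_mul_of_nonneg_left h1
        (by positivity : (0:ℝ) ≤ c * d * C * (1 + ε))
      nlinarith
    have h2 : f W ≤ c * d * C * (1 + ε) / (1 - ε) * Λ (B₂' ++ D) := by
      rw [div_mul_eq_mul_div, le_div_iff₀ hε1]
      linarith
    refine h2.trans (mul_le_mul_of_nonneg_right ?_ hΛpos)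
    rw [mul_div_assoc]
    refine mul_le_mul_of_nonneg_left ?_ (by positivity)
    rw [div_le_div_iff₀ hε1 (by positivity)]
    nlinarith [mul_nonneg (mul_nonneg h1ε.le hε1.le) hε.le]
end

section
/- Vertex-cover approximation guarantee from two nested greedy matchings: let B₂ ⊆ W ⊆ B₁ be edge sets, let M₁ be a maximal matching in B₁ and M₂ a maximal matching in B₂, and suppose 2|M₂| ≥ (1−ε)|M₁| for some ε ∈ (0, 1/2). Then V(M₁) is a vertex cover of W and |V(M₁)| ≤ 4(1+2ε)·VC(W), where VC(W) is the minimum vertex-cover size of the edge set W. -/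
/-- `M` is a maximal matching in the edge set `F`. -/
def IsMaximalMatching {V : Type*} (M F : Finset (Sym2 V)) : Prop :=
  IsMatching M ∧ M ⊆ F ∧ ∀ e ∈ F, ∃ f ∈ M, ∃ v ∈ e, v ∈ f

open Classical in
/-- The set `V(M)` of endpoints of the edges of `M`. -/
noncomputable def endpoints {V : Type*} [Fintype V] (M : Finset (Sym2 V)) : Finset V :=
  Finset.univ.filter fun v => ∃ e ∈ M, v ∈ e

lemma endpoints_card_le {V : Type*} [Fintype V] (M : Finset (Sym2 V)) :
    (endpoints M).card ≤ 2 * M.card := by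
  classical
  have hsub : endpoints M ⊆ M.biUnion fun e => Finset.univ.filter (· ∈ e) := by
    intro v hv
    simp only [endpoints, Finset.mem_filter, Finset.mem_univ, true_and] at hv
    obtain ⟨e, he, hve⟩ := hv
    exact Finset.mem_biUnion.2 ⟨e, he, by simp [hve]⟩
  calc (endpoints M).card ≤ (M.biUnion fun e => Finset.univ.filter (· ∈ e)).card :=
        Finset.card_le_card hsub
    _ ≤ ∑ e ∈ M, (Finset.univ.filter (· ∈ e)).card := Finset.card_biUnion_le
    _ ≤ ∑ e ∈ M, 2 := by
        refine Finset.sum_le_sum fun e _ => ?_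
        induction e using Sym2.ind with
        | _ a b =>
          have h : (Finset.univ.filter (· ∈ s(a, b))) ⊆ {a, b} := by
            intro v hv
            simp only [Finset.mem_filter, Sym2.mem_iff] at hv
            simp [hv.2]
          exact (Finset.card_le_card h).trans ((Finset.card_insert_le _ _).trans (by simp))
    _ = 2 * M.card := by rw [Finset.sum_const, smul_eq_mul, mul_comm]

lemma matching_card_le_cover {V : Type*} (M F : Finset (Sym2 V)) (C : Finset V)
    (hM : IsMatching M) (hMF : M ⊆ F) (hC : IsCover C F) : M.card ≤ C.card := by
  classical
  rcases M.eq_empty_or_nonempty with h | ⟨e0, he0⟩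
  · simp [h]
  have hV : Nonempty V := by
    obtain ⟨v, _, _⟩ := hC e0 (hMF he0); exact ⟨v⟩
  choose! g hg1 hg2 using fun e (he : e ∈ M) => hC e (hMF he)
  refine Finset.card_le_card_of_injOn g (fun e he => hg1 e he) ?_
  intro e he e' he' hee
  by_contra hne
  exact hM e he e' he' hne (g e) (hg2 e he) (hee ▸ hg2 e' he')

theorem nested_greedy_matchings_vc_approx {V : Type*} [Fintype V] [DecidableEq V]
    (B₂ W B₁ : Finset (Sym2 V)) (h₂ : B₂ ⊆ W) (h₁ : W ⊆ B₁)
    (M₁ M₂ : Finset (Sym2 V))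
    (hM₁ : IsMaximalMatching M₁ B₁) (hM₂ : IsMaximalMatching M₂ B₂)
    (ε : ℝ) (hε : 0 < ε) (hε2 : ε < 1 / 2)
    (hclose : (1 - ε) * (M₁.card : ℝ) ≤ 2 * (M₂.card : ℝ)) :
    IsCover (endpoints M₁) W ∧
    ((endpoints M₁).card : ℝ) ≤ 4 * (1 + 2 * ε) * (vcNum W : ℝ) := by
  classical
  have hcov : IsCover (endpoints M₁) W := by
    intro e he
    obtain ⟨f, hf, v, hv, hvf⟩ := hM₁.2.2 e (h₁ he)
    refine ⟨v, ?_, hv⟩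
    simp only [endpoints, Finset.mem_filter, Finset.mem_univ, true_and]
    exact ⟨f, hf, hvf⟩
  refine ⟨hcov, ?_⟩
  -- the infimum is attained
  have hne : {n | ∃ C : Finset V, IsCover C W ∧ C.card = n}.Nonempty := by
    refine ⟨(Finset.univ : Finset V).card, Finset.univ, fun e _ => ?_, rfl⟩
    induction e using Sym2.ind with
    | _ a b => exact ⟨a, Finset.mem_univ a, by simp⟩
  obtain ⟨C, hCcov, hCcard⟩ := Nat.sInf_mem hne
  have hm2 : M₂.card ≤ vcNum W := by
    rw [vcNum, ← hCcard]
    exact matching_card_le_cover M₂ W C hM₂.1 (fun e he => h₂ (hM₂.2.1 he)) hCcov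
  have h1 : ((endpoints M₁).card : ℝ) ≤ 2 * (M₁.card : ℝ) := by
    exact_mod_cast endpoints_card_le M₁
  have h2 : (M₂.card : ℝ) ≤ (vcNum W : ℝ) := by exact_mod_cast hm2
  have hm1 : (0 : ℝ) ≤ (M₁.card : ℝ) := Nat.cast_nonneg _
  nlinarith [mul_nonneg (mul_nonneg hε.le (by linarith : (0:ℝ) ≤ 1 - 2*ε)) hm1]
end
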